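/- Let D be a Dedekind domain and let D(X) be the localization of D[X] at the set of polynomials with unit content ideal. For every nonzero ideal 𝔞 = (α₀, α₁)D of D generated by two nonzero elements, the extended ideal 𝔞·D(X) is the principal ideal generated by α₀ + α₁X. -/

import Mathlib

/-- The content ideal of a polynomial: the ideal generated by its coefficients. -/
noncomputable def contentIdeal {D : Type*} [CommRing D] (f : Polynomial D) : Ideal D :=
  Ideal.span (Set.range f.coeff)

/-- Key consequence of invertibility of ideals in a Dedekind domain: for nonzero `α₀`,
there are elements `bᵢⱼ` (morally `bᵢⱼ = βᵢ αⱼ` with `β₀ α₀ + β₁ α₁ = 1`, `βᵢ ∈ 𝔞⁻¹`). -/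
theorem exists_bs {D : Type*} [CommRing D] [IsDomain D] [IsDedekindDomain D]
    (α₀ α₁ : D) (hα₀ : α₀ ≠ 0) :
    ∃ b₀₀ b₀₁ b₁₀ b₁₁ : D, b₀₀ + b₁₁ = 1 ∧ α₁ * b₀₀ = α₀ * b₁₀ ∧ α₁ * b₀₁ = α₀ * b₁₁ := by
  classical
  let K := FractionRing D
  set I : FractionalIdeal (nonZeroDivisors D) K := ↑(Ideal.span {α₀, α₁}) with hIdef
  have hspan_ne : Ideal.span {α₀, α₁} ≠ ⊥ := by
    intro h
    apply hα₀
    have : α₀ ∈ Ideal.span ({α₀, α₁} : Set D) :=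
      Ideal.subset_span (by simp)
    rw [h] at this
    simpa using this
  have hne : I ≠ 0 := by
    rw [hIdef, ne_eq, FractionalIdeal.coeIdeal_eq_zero]
    exact hspan_ne
  have hcancel : I * I⁻¹ = 1 := mul_inv_cancel₀ hne
  have hsplit : I = FractionalIdeal.spanSingleton (nonZeroDivisors D) (algebraMap D K α₀) +
      FractionalIdeal.spanSingleton (nonZeroDivisors D) (algebraMap D K α₁) := by
    rw [hIdef, show ({α₀, α₁} : Set D) = insert α₀ {α₁} from rfl, Ideal.span_insert,
      FractionalIdeal.coeIdeal_sup, FractionalIdeal.coeIdeal_span_singleton,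
      FractionalIdeal.coeIdeal_span_singleton]
  have h1 : (1 : K) ∈ I * I⁻¹ := by rw [hcancel]; exact FractionalIdeal.one_mem_one _
  rw [hsplit, add_mul] at h1
  rw [FractionalIdeal.mem_add] at h1
  obtain ⟨u, hu, v, hv, huv⟩ := h1
  rw [FractionalIdeal.mem_singleton_mul] at hu hv
  obtain ⟨β₀, hβ₀, rfl⟩ := hu
  obtain ⟨β₁, hβ₁, rfl⟩ := hv
  rw [← hsplit] at hβ₀ hβ₁
  have hmemI : ∀ γ : D, γ ∈ Ideal.span ({α₀, α₁} : Set D) → algebraMap D K γ ∈ I := fun γ hγ =>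
    FractionalIdeal.mem_coeIdeal_of_mem _ hγ
  have hprod : ∀ (β : K), β ∈ I⁻¹ → ∀ γ : D, γ ∈ Ideal.span ({α₀, α₁} : Set D) →
      ∃ b : D, algebraMap D K b = β * algebraMap D K γ := by
    intro β hβ γ hγ
    have : β * algebraMap D K γ ∈ I⁻¹ * I := FractionalIdeal.mul_mem_mul hβ (hmemI γ hγ)
    rw [mul_comm, hcancel] at this
    obtain ⟨b, _, hb⟩ := (FractionalIdeal.mem_coeIdeal _).mp this
    exact ⟨b, hb⟩
  have hα₀mem : α₀ ∈ Ideal.span ({α₀, α₁} : Set D) := Ideal.subset_span (by simp)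
  have hα₁mem : α₁ ∈ Ideal.span ({α₀, α₁} : Set D) := Ideal.subset_span (by simp)
  obtain ⟨b₀₀, hb₀₀⟩ := hprod β₀ hβ₀ α₀ hα₀mem
  obtain ⟨b₁₀, hb₁₀⟩ := hprod β₀ hβ₀ α₁ hα₁mem
  obtain ⟨b₀₁, hb₀₁⟩ := hprod β₁ hβ₁ α₀ hα₀mem
  obtain ⟨b₁₁, hb₁₁⟩ := hprod β₁ hβ₁ α₁ hα₁mem
  have hinj : Function.Injective (algebraMap D K) := IsFractionRing.injective D K
  refine ⟨b₀₀, b₀₁, b₁₀, b₁₁, ?_, ?_, ?_⟩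
  · apply hinj
    rw [map_add, map_one, hb₀₀, hb₁₁]
    rw [mul_comm β₀, mul_comm β₁]
    exact huv
  · apply hinj
    rw [map_mul, map_mul, hb₀₀, hb₁₀]
    ring
  · apply hinj
    rw [map_mul, map_mul, hb₀₁, hb₁₁]
    ring

open Polynomial in
/-- In `D(X)`, the localization of `D[X]` at the polynomials of unit content, the extension
of a nonzero ideal `𝔞 = (α₀, α₁)` of `D` (with `α₀, α₁ ≠ 0`) is the principal ideal
generated by `α₀ + α₁ X`. -/
theorem extended_ideal_principal {D : Type*} [CommRing D] [IsDomain D] [IsDedekindDomain D]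
    (α₀ α₁ : D) (hα₀ : α₀ ≠ 0) (hα₁ : α₁ ≠ 0) :
    Ideal.map
        ((algebraMap (Polynomial D)
              (Localization (Submonoid.closure {g : Polynomial D | _root_.contentIdeal g = ⊤}))).comp
          (Polynomial.C))
        (Ideal.span {α₀, α₁}) =
      Ideal.span
        {algebraMap (Polynomial D)
            (Localization (Submonoid.closure {g : Polynomial D | _root_.contentIdeal g = ⊤}))
            (Polynomial.C α₀ + Polynomial.C α₁ * Polynomial.X)} := by
  classical
  obtain ⟨b₀₀, b₀₁, b₁₀, b₁₁, hb1, hb2, hb3⟩ := exists_bs α₀ α₁ hα₀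
  set S := Submonoid.closure {g : Polynomial D | _root_.contentIdeal g = ⊤} with hS
  set L := Localization S with hL
  set ψ := algebraMap (Polynomial D) L with hψ
  set f : Polynomial D := C α₀ + C α₁ * X with hf
  set s : Polynomial D := C b₀₀ + (C b₁₀ + C b₀₁) * X + C b₁₁ * X ^ 2 with hs
  -- s has unit content
  have hc0 : s.coeff 0 = b₀₀ := by simp [hs]
  have hc2 : s.coeff 2 = b₁₁ := by simp [hs, coeff_C]
  have hcont : _root_.contentIdeal s = ⊤ := by
    rw [Ideal.eq_top_iff_one, _root_.contentIdeal, ← hb1]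
    exact add_mem (Ideal.subset_span ⟨0, hc0⟩) (Ideal.subset_span ⟨2, hc2⟩)
  have hsS : s ∈ S := Submonoid.subset_closure hcont
  have hunit : IsUnit (ψ s) := IsLocalization.map_units L (⟨s, hsS⟩ : S)
  obtain ⟨u, hu_eq⟩ := hunit
  -- polynomial identities
  have hb2' : C α₁ * C b₀₀ = C α₀ * C b₁₀ := by rw [← C_mul, ← C_mul, hb2]
  have hb3' : C α₁ * C b₀₁ = C α₀ * C b₁₁ := by rw [← C_mul, ← C_mul, hb3]
  have e0 : f * (C b₀₀ + C b₀₁ * X) = C α₀ * s := by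
    rw [hf, hs]; linear_combination (X : Polynomial D) * hb2' + (X : Polynomial D) ^ 2 * hb3'
  have e1 : f * (C b₁₀ + C b₁₁ * X) = C α₁ * s := by
    rw [hf, hs]; linear_combination -hb2' - (X : Polynomial D) * hb3'
  have key : ∀ (a : D) (h : Polynomial D), f * h = C a * s → ψ (C a) ∈ Ideal.span {ψ f} := by
    intro a h he
    rw [Ideal.mem_span_singleton']
    refine ⟨ψ h * ↑u⁻¹, ?_⟩
    have hfh : ψ f * ψ h = ψ (C a) * ↑u := by
      rw [hu_eq, ← map_mul, ← map_mul, he]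
    calc ψ h * ↑u⁻¹ * ψ f = ψ f * ψ h * ↑u⁻¹ := by ring
      _ = ψ (C a) * ↑u * ↑u⁻¹ := by rw [hfh]
      _ = ψ (C a) := by rw [mul_assoc, Units.mul_inv, mul_one]
  apply le_antisymm
  · rw [Ideal.map_span, Ideal.span_le]
    rintro x ⟨a, ha, rfl⟩
    rcases ha with rfl | ha
    · exact key a _ e0
    · rcases ha with rfl
      exact key a _ e1
  · rw [Ideal.span_le, Set.singleton_subset_iff]
    have : ψ f = (ψ.comp C) α₀ + (ψ.comp C) α₁ * ψ X := by
      rw [hf]; simp [map_add, map_mul]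
    rw [SetLike.mem_coe, this]
    exact add_mem
      (Ideal.mem_map_of_mem _ (Ideal.subset_span (by simp)))
      (Ideal.mul_mem_right _ _ (Ideal.mem_map_of_mem _ (Ideal.subset_span (by simp))))
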